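/- arXiv:1710.05428 — 3 statements merged into one kernel-verified Lean document; each statement's English description precedes it below -/
import Mathlib

section
/- Let p be a prime, a and g integers coprime to p, and U, V positive integers with U, V ≤ p−1. Let M_{a,g,p}(U,V) be the number of pairs (x,y) with 1 ≤ x ≤ U, 1 ≤ y ≤ V, y ≡ a·g^x (mod p), and let N_{a,g,p}(U,V) be the number of such pairs with additionally gcd(x,y)=1. Then N_{a,g,p}(U,V) = ∑_{d ≥ 1, gcd(d,p)=1} μ(d) · M_{a·d̄, g^d, p}(⌊U/d⌋, ⌊V/d⌋), where d̄ denotes the multiplicative inverse of d modulo p and the sum has finitely many nonzero terms (only d ≤ min(U,V) contribute). -/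
open scoped Classical
open ArithmeticFunction
open scoped ArithmeticFunction.Moebius

/-- Möbius inversion identity for the number of visible points on an exponential curve:
N_{a,g,p}(U,V) = ∑_{d ≤ min(U,V), gcd(d,p)=1} μ(d)·M_{a·d̄, g^d, p}(⌊U/d⌋,⌊V/d⌋). -/
theorem stmt_4 (p : ℕ) (hp : p.Prime) (a g : ℤ)
    (ha : Int.gcd a p = 1) (hg : Int.gcd g p = 1)
    (U V : ℕ) (hU1 : 1 ≤ U) (hV1 : 1 ≤ V) (hU : U ≤ p - 1) (hV : V ≤ p - 1)
    (M : ℕ → ℕ)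
    (hM : ∀ d : ℕ, M d = ((Finset.Icc 1 (U / d) ×ˢ Finset.Icc 1 (V / d)).filter
      (fun xy : ℕ × ℕ =>
        (xy.2 : ZMod p) = (a : ZMod p) * ((d : ZMod p))⁻¹ * ((g : ZMod p) ^ d) ^ xy.1)).card)
    (N : ℕ)
    (hN : N = ((Finset.Icc 1 U ×ˢ Finset.Icc 1 V).filter (fun xy : ℕ × ℕ =>
      ((xy.2 : ZMod p) = (a : ZMod p) * (g : ZMod p) ^ xy.1) ∧
        Nat.gcd xy.1 xy.2 = 1)).card) :
    (N : ℤ) = ∑ d ∈ (Finset.Icc 1 (min U V)).filter (fun d => Nat.gcd d p = 1),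
      μ d * (M d : ℤ) := by
  haveI := Fact.mk hp
  have hp1 : 1 < p := hp.one_lt
  set m := min U V with hm
  set S := Finset.Icc 1 U ×ˢ Finset.Icc 1 V with hS
  -- every d in Icc 1 m is coprime to p
  have hcop : ∀ d ∈ Finset.Icc 1 m, Nat.gcd d p = 1 := by
    intro d hd
    rw [Finset.mem_Icc] at hd
    have hdU : d ≤ U := hd.2.trans (min_le_left _ _)
    have hdp : d < p := by omega
    rw [Nat.gcd_comm]
    exact hp.coprime_iff_not_dvd.mpr
      (fun h => absurd (Nat.le_of_dvd (by omega) h) (by omega))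
  have hfilter : (Finset.Icc 1 m).filter (fun d => Nat.gcd d p = 1) = Finset.Icc 1 m :=
    Finset.filter_true_of_mem hcop
  -- key: M d equals the count of (x,y) in S with the congruence and d ∣ x, d ∣ y
  have key : ∀ d ∈ Finset.Icc 1 m, M d =
      (S.filter (fun xy : ℕ × ℕ =>
        ((xy.2 : ZMod p) = (a : ZMod p) * (g : ZMod p) ^ xy.1) ∧ d ∣ xy.1 ∧ d ∣ xy.2)).card := by
    intro d hd
    rw [Finset.mem_Icc] at hd
    have hd0 : 0 < d := hd.1
    have hdne : (d : ZMod p) ≠ 0 := by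
      rw [Ne, ZMod.natCast_eq_zero_iff]
      intro h
      have := Nat.le_of_dvd hd0 h
      have hdU : d ≤ U := hd.2.trans (min_le_left _ _)
      omega
    have hiff : ∀ u c : ZMod p, u = (a : ZMod p) * ((d : ZMod p))⁻¹ * c ↔
        (d : ZMod p) * u = (a : ZMod p) * c := by
      intro u c
      rw [mul_comm ((d : ZMod p)) u, ← eq_div_iff hdne, div_eq_mul_inv, mul_right_comm]
    rw [hM d]
    apply Finset.card_bij' (fun xy _ => (d * xy.1, d * xy.2))
      (fun xy _ => (xy.1 / d, xy.2 / d))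
    · intro xy hxy
      rw [Finset.mem_filter, Finset.mem_product, Finset.mem_Icc, Finset.mem_Icc] at hxy
      obtain ⟨⟨⟨hx1, hx2⟩, ⟨hy1, hy2⟩⟩, hcond⟩ := hxy
      rw [Finset.mem_filter, Finset.mem_product, Finset.mem_Icc, Finset.mem_Icc]
      have hxU : d * xy.1 ≤ U := by
        rw [mul_comm]; exact (Nat.le_div_iff_mul_le hd0).mp hx2
      have hyV : d * xy.2 ≤ V := by
        rw [mul_comm]; exact (Nat.le_div_iff_mul_le hd0).mp hy2
      refine ⟨⟨⟨Nat.mul_pos hd0 hx1, hxU⟩, ⟨Nat.mul_pos hd0 hy1, hyV⟩⟩, ?_, ?_, ?_⟩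
      · push_cast
        rw [pow_mul]
        exact (hiff _ _).mp hcond
      · exact Dvd.intro _ rfl
      · exact Dvd.intro _ rfl
    · intro xy hxy
      rw [Finset.mem_filter, Finset.mem_product, Finset.mem_Icc, Finset.mem_Icc] at hxy
      obtain ⟨⟨⟨hx1, hx2⟩, ⟨hy1, hy2⟩⟩, hcond, hdx, hdy⟩ := hxy
      rw [Finset.mem_filter, Finset.mem_product, Finset.mem_Icc, Finset.mem_Icc]
      refine ⟨⟨⟨(Nat.one_le_div_iff hd0).mpr (Nat.le_of_dvd (by omega) hdx),
        Nat.div_le_div_right hx2⟩,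
        ⟨(Nat.one_le_div_iff hd0).mpr (Nat.le_of_dvd (by omega) hdy),
        Nat.div_le_div_right hy2⟩⟩, ?_⟩
      rw [hiff]
      have hx : (d * (xy.1 / d)) = xy.1 := Nat.mul_div_cancel' hdx
      have hy : (d * (xy.2 / d)) = xy.2 := Nat.mul_div_cancel' hdy
      have : ((d : ZMod p)) * ((xy.2 / d : ℕ) : ZMod p) = ((xy.2 : ℕ) : ZMod p) := by
        conv_rhs => rw [← hy]
        push_cast
        ring
      rw [this, hcond, ← pow_mul, hx]
    · intro xy hxy
      simp [Nat.mul_div_cancel_left _ hd0]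
    · intro xy hxy
      rw [Finset.mem_filter] at hxy
      obtain ⟨_, _, hdx, hdy⟩ := hxy
      simp [Nat.mul_div_cancel' hdx, Nat.mul_div_cancel' hdy]
  -- Möbius sum identity
  have hmoebsum : ∀ n : ℕ, ∑ d ∈ n.divisors, μ d = if n = 1 then (1 : ℤ) else 0 := by
    intro n
    rw [← coe_mul_zeta_apply, moebius_mul_coe_zeta, one_apply]
  -- rewrite N via inclusion-exclusion
  rw [hfilter]
  have hNsum : (N : ℤ) = ∑ xy ∈ S.filter (fun xy : ℕ × ℕ =>
      (xy.2 : ZMod p) = (a : ZMod p) * (g : ZMod p) ^ xy.1),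
      (if Nat.gcd xy.1 xy.2 = 1 then (1 : ℤ) else 0) := by
    rw [hN, ← Finset.filter_filter, Finset.card_filter]
    push_cast
    rfl
  rw [hNsum]
  have hinner : ∀ xy ∈ S.filter (fun xy : ℕ × ℕ =>
      (xy.2 : ZMod p) = (a : ZMod p) * (g : ZMod p) ^ xy.1),
      (if Nat.gcd xy.1 xy.2 = 1 then (1 : ℤ) else 0) =
      ∑ d ∈ Finset.Icc 1 m, (if d ∣ xy.1 ∧ d ∣ xy.2 then (μ d : ℤ) else 0) := by
    intro xy hxy
    rw [Finset.mem_filter, Finset.mem_product, Finset.mem_Icc, Finset.mem_Icc] at hxy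
    obtain ⟨⟨⟨hx1, hx2⟩, ⟨hy1, hy2⟩⟩, _⟩ := hxy
    rw [← Finset.sum_filter]
    have hset : (Finset.Icc 1 m).filter (fun d => d ∣ xy.1 ∧ d ∣ xy.2) =
        (Nat.gcd xy.1 xy.2).divisors := by
      ext d
      rw [Finset.mem_filter, Finset.mem_Icc, Nat.mem_divisors, Nat.dvd_gcd_iff]
      constructor
      · rintro ⟨_, h⟩
        exact ⟨h, fun hc => by simp [Nat.gcd_eq_zero_iff] at hc; omega⟩
      · rintro ⟨⟨h1, h2⟩, _⟩
        have hd1 : 1 ≤ d := by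
          rcases Nat.eq_zero_or_pos d with h | h
          · subst h; simp at h1; omega
          · exact h
        have hdx : d ≤ xy.1 := Nat.le_of_dvd (by omega) h1
        have hdy : d ≤ xy.2 := Nat.le_of_dvd (by omega) h2
        exact ⟨⟨hd1, le_min (by omega) (by omega)⟩, h1, h2⟩
    rw [hset, hmoebsum]
  rw [Finset.sum_congr rfl hinner, Finset.sum_comm]
  refine Finset.sum_congr rfl ?_
  intro d hd
  rw [key d hd, Finset.card_filter]
  push_cast
  rw [Finset.mul_sum]
  rw [Finset.sum_filter]
  refine Finset.sum_congr rfl ?_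
  intro xy _
  by_cases h1 : (xy.2 : ZMod p) = (a : ZMod p) * (g : ZMod p) ^ xy.1 <;>
    by_cases h2 : d ∣ xy.1 ∧ d ∣ xy.2 <;> simp [h1, h2]
end

section
/- Let p be a prime, a and g integers coprime to p, and D ≤ p a positive integer. Let R_{a,g,p}(K;D) be the number of integers d with K+1 ≤ d ≤ K+D satisfying a·d ≡ g^d (mod p). Then R_{a,g,p}(K;D) = O(D^{1/2}), i.e., there is an absolute constant C such that R_{a,g,p}(K;D) ≤ C·D^{1/2} for all such p, a, g, K, D. -/
open scoped Classical

/-- The number of solutions d ∈ (K, K+D] of a·d ≡ g^d (mod p) is O(D^{1/2}),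
uniformly in p, a, g, K, D. -/
theorem stmt_5 : ∃ C : ℝ, 0 < C ∧
    ∀ (p : ℕ) [Fact p.Prime] (a g : ℤ), Int.gcd (a * g) p = 1 →
      ∀ (K : ℤ) (D : ℕ), 0 < D → D ≤ p →
        (((Finset.Icc (K + 1) (K + (D : ℤ))).filter (fun d : ℤ =>
            ((a * d : ℤ) : ZMod p) = (g : ZMod p) ^ d)).card : ℝ) ≤
          C * Real.sqrt D := by
  refine ⟨2, by norm_num, ?_⟩
  intro p hp a g hcop K D hD hDp
  set S := (Finset.Icc (K + 1) (K + (D : ℤ))).filter (fun d : ℤ =>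
      ((a * d : ℤ) : ZMod p) = (g : ZMod p) ^ d) with hSdef
  have hp1 : 1 < p := hp.out.one_lt
  have hzero : ∀ k : ℤ, (k : ZMod p) = 0 → |k| < (p : ℤ) → k = 0 := by
    intro k hk hlt
    exact Int.eq_zero_of_abs_lt_dvd ((ZMod.intCast_zmod_eq_zero_iff_dvd k p).1 hk) hlt
  have hg : (g : ZMod p) ≠ 0 := by
    intro h
    have hdvd : (p : ℤ) ∣ g := (ZMod.intCast_zmod_eq_zero_iff_dvd g p).1 h
    have h2 : (p : ℤ) ∣ (Int.gcd (a * g) p : ℤ) := Int.dvd_coe_gcd (hdvd.mul_left a) dvd_rfl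
    rw [hcop] at h2
    have := Int.le_of_dvd one_pos h2
    omega
  have ha : (a : ZMod p) ≠ 0 := by
    intro h
    have hdvd : (p : ℤ) ∣ a := (ZMod.intCast_zmod_eq_zero_iff_dvd a p).1 h
    have h2 : (p : ℤ) ∣ (Int.gcd (a * g) p : ℤ) := Int.dvd_coe_gcd (hdvd.mul_right g) dvd_rfl
    rw [hcop] at h2
    have := Int.le_of_dvd one_pos h2
    omega
  have hmem : ∀ d : ℤ, d ∈ S → (K + 1 ≤ d ∧ d ≤ K + (D : ℤ)) ∧
      ((a * d : ℤ) : ZMod p) = (g : ZMod p) ^ d := by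
    intro d hd
    rw [hSdef, Finset.mem_filter, Finset.mem_Icc] at hd
    exact hd
  -- key relation: for solutions d, d' we have d * g^(d'-d) = d' in ZMod p
  have hrel : ∀ d d' : ℤ, d ∈ S → d' ∈ S →
      (d : ZMod p) * (g : ZMod p) ^ (d' - d) = (d' : ZMod p) := by
    intro d d' hd hd'
    have h1 := (hmem d hd).2
    have h2 := (hmem d' hd').2
    have hsplit : (g : ZMod p) ^ d' = (g : ZMod p) ^ d * (g : ZMod p) ^ (d' - d) := by
      rw [← zpow_add₀ hg]; ring_nf
    push_cast at h1 h2
    have key : (a : ZMod p) * ((d : ZMod p) * (g : ZMod p) ^ (d' - d)) =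
        (a : ZMod p) * (d' : ZMod p) := by
      rw [h2, hsplit, ← h1]; ring
    exact mul_left_cancel₀ ha key
  -- injectivity of difference map on offDiag
  have hinj : Set.InjOn (fun x : ℤ × ℤ => x.2 - x.1) (S.offDiag : Set (ℤ × ℤ)) := by
    rintro ⟨d, d'⟩ hdd ⟨e, e'⟩ hee hk
    simp only [Finset.coe_offDiag, Set.mem_offDiag] at hdd hee
    obtain ⟨hd, hd', hne⟩ := hdd
    obtain ⟨he, he', hne'⟩ := hee
    simp only at hk
    have hbd := (hmem d hd).1
    have hbd' := (hmem d' hd').1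
    have hbe := (hmem e he).1
    have hbe' := (hmem e' he').1
    set k : ℤ := d' - d with hkdef
    have hkne : k ≠ 0 := sub_ne_zero.mpr (Ne.symm hne)
    have hkabs : |k| < (p : ℤ) := by
      rw [abs_lt]; constructor <;> [skip; skip] <;>
        (have : ((D : ℤ)) ≤ (p : ℤ) := by exact_mod_cast hDp) <;> omega
    have r1 : (d : ZMod p) * (g : ZMod p) ^ k = (d : ZMod p) + (k : ZMod p) := by
      have := hrel d d' hd hd'
      rw [← hkdef] at this
      rw [this]
      have : d' = d + k := by omega
      rw [this]; push_cast; ring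
    have r2 : (e : ZMod p) * (g : ZMod p) ^ k = (e : ZMod p) + (k : ZMod p) := by
      have h := hrel e e' he he'
      rw [← hk] at h
      rw [h]
      have : e' = e + k := by omega
      rw [this]; push_cast; ring
    by_cases hgk : (g : ZMod p) ^ k = 1
    · exfalso
      rw [hgk, mul_one] at r1
      have : (k : ZMod p) = 0 := by linear_combination -r1
      exact hkne (hzero k this hkabs)
    · have hfac : ((d : ZMod p) - (e : ZMod p)) * ((g : ZMod p) ^ k - 1) = 0 := by
        linear_combination r1 - r2
      have hde : (d : ZMod p) - (e : ZMod p) = 0 := by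
        rcases mul_eq_zero.1 hfac with h | h
        · exact h
        · exact absurd (by linear_combination h) hgk
      have hde' : ((d - e : ℤ) : ZMod p) = 0 := by push_cast; exact hde
      have habsde : |d - e| < (p : ℤ) := by
        rw [abs_lt]; constructor <;>
          (have : ((D : ℤ)) ≤ (p : ℤ) := by exact_mod_cast hDp) <;> omega
      have hde2 : d = e := by have := hzero _ hde' habsde; omega
      have hde3 : d' = e' := by omega
      simp only [Prod.mk.injEq]
      exact ⟨hde2, hde3⟩
  -- counting: offDiag injects into Icc (1-D) (D-1)
  have hmaps : ∀ x ∈ S.offDiag, x.2 - x.1 ∈ Finset.Icc (1 - (D : ℤ)) ((D : ℤ) - 1) := by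
    rintro ⟨d, d'⟩ hx
    rw [Finset.mem_offDiag] at hx
    obtain ⟨hd, hd', _⟩ := hx
    have h1 := (hmem d hd).1
    have h2 := (hmem d' hd').1
    rw [Finset.mem_Icc]
    omega
  have hcard1 : S.offDiag.card ≤ (Finset.Icc (1 - (D : ℤ)) ((D : ℤ) - 1)).card :=
    Finset.card_le_card_of_injOn _ hmaps hinj
  have hcard2 : (Finset.Icc (1 - (D : ℤ)) ((D : ℤ) - 1)).card = 2 * D - 1 := by
    rw [Int.card_Icc]
    omega
  have hoff : S.offDiag.card = S.card * S.card - S.card := Finset.offDiag_card S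
  set n := S.card with hn
  have hnn : n * n - n ≤ 2 * D := by omega
  -- conclude
  have hD1 : (1 : ℝ) ≤ Real.sqrt D := by
    rw [show (1:ℝ) = Real.sqrt 1 by simp]
    exact Real.sqrt_le_sqrt (by exact_mod_cast hD)
  rcases le_or_gt n 1 with hsmall | hbig
  · have : (n : ℝ) ≤ 1 := by exact_mod_cast hsmall
    nlinarith
  · have h2n : 2 ≤ n := hbig
    have h2nn : 2 * n ≤ n * n := Nat.mul_le_mul_right n h2n
    have hsq : n * n ≤ 4 * D := by omega
    have hsqR : (n : ℝ) ^ 2 ≤ 4 * (D : ℝ) := by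
      have : ((n * n : ℕ) : ℝ) ≤ ((4 * D : ℕ) : ℝ) := by exact_mod_cast hsq
      push_cast at this; nlinarith
    have : (n : ℝ) ≤ Real.sqrt (4 * D) := by
      rw [show (n:ℝ) = Real.sqrt ((n:ℝ)^2) by rw [Real.sqrt_sq (by positivity)]]
      exact Real.sqrt_le_sqrt hsqR
    calc (n : ℝ) ≤ Real.sqrt (4 * D) := this
      _ = 2 * Real.sqrt D := by
          rw [show (4 : ℝ) * D = (2 * Real.sqrt D)^2 by
            rw [mul_pow, Real.sq_sqrt (by positivity)]; ring]
          rw [Real.sqrt_sq (by positivity)]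
end

section
/- Let p be a prime, a and g integers coprime to p, n ≥ 2 an integer, and I₁, I₂ intervals of h₁ and h₂ consecutive integers respectively. Let M = M_{a,g,p}(I₁,I₂) be the number of pairs (x,y) ∈ I₁ × I₂ with y ≡ a·g^x (mod p). Suppose that the number K of 2n-tuples (y₁,…,yₙ,z₁,…,zₙ) ∈ I₂^{2n} with y₁⋯yₙ ≡ z₁⋯zₙ ≢ 0 (mod p) satisfies K ≤ B. Suppose also that 0 ∉ I₂ modulo p (every element of I₂ is coprime to p). Then M^{2n} ≤ n·h₁·B. -/
open scoped Classical

/-- Core inequality of Lemma 2.6: M^{2n} ≤ n·h₁·B, where M counts points of the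
exponential curve in I₁ × I₂ and B bounds the number of coincident n-fold products
from I₂. -/
theorem stmt_11 (p : ℕ) [Fact p.Prime] (a g : (ZMod p)ˣ) (n : ℕ) (hn : 2 ≤ n)
    (K₁ K₂ : ℤ) (h₁ h₂ : ℕ)
    (hh₁ : h₁ ≤ orderOf g) (hh₂ : h₂ ≤ orderOf g)
    (h0 : ∀ y ∈ Finset.Icc (K₂ + 1) (K₂ + (h₂ : ℤ)), (y : ZMod p) ≠ 0)
    (M : ℕ)
    (hMdef : M = ((Finset.Icc (K₁ + 1) (K₁ + (h₁ : ℤ)) ×ˢ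
        Finset.Icc (K₂ + 1) (K₂ + (h₂ : ℤ))).filter (fun xy : ℤ × ℤ =>
      ((xy.2 : ZMod p) = ((a * g ^ xy.1 : (ZMod p)ˣ) : ZMod p)))).card)
    (B : ℕ)
    (hK : ((Fintype.piFinset (fun _ : Fin n => Finset.Icc (K₂ + 1) (K₂ + (h₂ : ℤ))) ×ˢ
        Fintype.piFinset (fun _ : Fin n => Finset.Icc (K₂ + 1) (K₂ + (h₂ : ℤ)))).filter
      (fun fg : (Fin n → ℤ) × (Fin n → ℤ) =>
        (∏ i, ((fg.1 i : ZMod p)) = ∏ i, ((fg.2 i : ZMod p))) ∧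
          ∏ i, ((fg.1 i : ZMod p)) ≠ 0)).card ≤ B) :
    M ^ (2 * n) ≤ n * h₁ * B := by
  classical
  set I₁ := Finset.Icc (K₁ + 1) (K₁ + (h₁ : ℤ)) with hI₁
  set I₂ := Finset.Icc (K₂ + 1) (K₂ + (h₂ : ℤ)) with hI₂
  rcases Nat.eq_zero_or_pos h₁ with h10 | h1pos
  · subst h10
    have hI1e : I₁ = ∅ := by simp [hI₁]
    have hM0 : M = 0 := by simp [hMdef, hI1e]
    subst hM0
    rw [zero_pow (by omega)]
    exact Nat.zero_le _
  have htord : 0 < orderOf g := orderOf_pos g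
  -- uniqueness of the exponent in I₁
  have huniq : ∀ x₁ ∈ I₁, ∀ x₂ ∈ I₁, g ^ x₁ = g ^ x₂ → x₁ = x₂ := by
    intro x₁ hx₁ x₂ hx₂ hgx
    rw [zpow_eq_zpow_iff_modEq] at hgx
    have hd : (orderOf g : ℤ) ∣ x₁ - x₂ := Int.ModEq.dvd hgx.symm
    rw [hI₁, Finset.mem_Icc] at hx₁ hx₂
    have hord : (h₁ : ℤ) ≤ (orderOf g : ℤ) := by exact_mod_cast hh₁
    have h1z : (1 : ℤ) ≤ (h₁ : ℤ) := by exact_mod_cast h1pos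
    have : x₁ - x₂ = 0 := by
      refine Int.eq_zero_of_dvd_of_natAbs_lt_natAbs hd ?_
      have h1 : (x₁ - x₂).natAbs < h₁ := by
        rw [← Int.ofNat_lt]
        rcases Int.natAbs_eq (x₁ - x₂) with h | h <;> omega
      omega
    omega
  set Y : Finset ℤ := I₂.filter
    (fun y => ∃ x ∈ I₁, (y : ZMod p) = ((a * g ^ x : (ZMod p)ˣ) : ZMod p)) with hY
  -- M = |Y|
  have hMY : M = Y.card := by
    rw [hMdef]
    apply Finset.card_bij (fun xy _ => xy.2)
    · intro xy hxy
      simp only [Finset.mem_filter, Finset.mem_product] at hxy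
      simp only [hY, Finset.mem_filter]
      exact ⟨hxy.1.2, xy.1, hxy.1.1, hxy.2⟩
    · intro xy₁ h1 xy₂ h2 heq
      simp only [Finset.mem_filter, Finset.mem_product] at h1 h2
      have : ((a * g ^ xy₁.1 : (ZMod p)ˣ) : ZMod p) = ((a * g ^ xy₂.1 : (ZMod p)ˣ) : ZMod p) := by
        rw [← h1.2, ← h2.2, heq]
      have hu : a * g ^ xy₁.1 = a * g ^ xy₂.1 := Units.ext this
      have := huniq _ h1.1.1 _ h2.1.1 (mul_left_cancel hu)
      exact Prod.ext this heq
    · intro y hy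
      simp only [hY, Finset.mem_filter] at hy
      obtain ⟨hyI, x, hxI, hx⟩ := hy
      exact ⟨(x, y), by simp [Finset.mem_filter, Finset.mem_product, hxI, hyI, hx], rfl⟩
  -- selection function
  set xsel : ℤ → ℤ := fun y =>
    if h : ∃ x ∈ I₁, (y : ZMod p) = ((a * g ^ x : (ZMod p)ˣ) : ZMod p) then h.choose else 0
    with hxseldef
  have hxsel : ∀ y ∈ Y, xsel y ∈ I₁ ∧ (y : ZMod p) = ((a * g ^ xsel y : (ZMod p)ˣ) : ZMod p) := by
    intro y hy
    simp only [hY, Finset.mem_filter] at hy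
    obtain ⟨-, h⟩ := hy
    simp only [hxseldef, dif_pos h]
    exact ⟨h.choose_spec.1, h.choose_spec.2⟩
  set f : (Fin n → ℤ) → ZMod p := fun t => ∏ i, ((t i : ZMod p)) with hf
  set P : Finset (Fin n → ℤ) := Fintype.piFinset (fun _ : Fin n => Y) with hP
  have hPcard : P.card = M ^ n := by
    rw [hP, Fintype.card_piFinset]
    simp [hMY]
  -- image of f on P is small
  have hzsum : ∀ (x : Fin n → ℤ), g ^ (∑ i, x i) = ∏ i, g ^ x i := by
    intro x
    induction (Finset.univ : Finset (Fin n)) using Finset.cons_induction with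
    | empty => simp
    | cons i s hi ih => rw [Finset.sum_cons, Finset.prod_cons, zpow_add, ih]
  have himg : (P.image f).card ≤ n * h₁ := by
    have hsub : P.image f ⊆ (Finset.Icc ((n : ℤ) * (K₁ + 1)) ((n : ℤ) * (K₁ + (h₁ : ℤ)))).image
        (fun s : ℤ => ((a ^ n * g ^ s : (ZMod p)ˣ) : ZMod p)) := by
      intro v hv
      obtain ⟨t, htP, rfl⟩ := Finset.mem_image.mp hv
      have htm : ∀ i, t i ∈ Y := by
        intro i; exact Fintype.mem_piFinset.mp htP i
      refine Finset.mem_image.mpr ⟨∑ i, xsel (t i), ?_, ?_⟩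
      · rw [Finset.mem_Icc]
        constructor
        · calc (n : ℤ) * (K₁ + 1) = ∑ _i : Fin n, (K₁ + 1) := by
                simp
            _ ≤ ∑ i, xsel (t i) := by
                refine Finset.sum_le_sum fun i _ => ?_
                have := (hxsel _ (htm i)).1
                rw [hI₁, Finset.mem_Icc] at this
                exact this.1
        · calc ∑ i, xsel (t i) ≤ ∑ _i : Fin n, (K₁ + (h₁ : ℤ)) := by
                refine Finset.sum_le_sum fun i _ => ?_
                have := (hxsel _ (htm i)).1
                rw [hI₁, Finset.mem_Icc] at this
                exact this.2
            _ = (n : ℤ) * (K₁ + (h₁ : ℤ)) := by simp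
      · have : f t = ((∏ i, (a * g ^ xsel (t i)) : (ZMod p)ˣ) : ZMod p) := by
          rw [hf, Units.coe_prod]
          refine Finset.prod_congr rfl fun i _ => ?_
          exact (hxsel _ (htm i)).2
        rw [this]
        congr 1
        rw [Finset.prod_mul_distrib, Finset.prod_const, hzsum]
        simp
    calc (P.image f).card ≤ _ := Finset.card_le_card hsub
      _ ≤ (Finset.Icc ((n : ℤ) * (K₁ + 1)) ((n : ℤ) * (K₁ + (h₁ : ℤ)))).card :=
          Finset.card_image_le
      _ ≤ n * h₁ := by
        rw [Int.card_Icc]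
        have hn1 : 1 ≤ n := by omega
        have : (n : ℤ) * (K₁ + (h₁ : ℤ)) + 1 - (n : ℤ) * (K₁ + 1) = (n : ℤ) * h₁ - n + 1 := by
          ring
        rw [this]
        have : ((n * h₁ : ℕ) : ℤ) - (n : ℤ) + 1 ≤ ((n * h₁ : ℕ) : ℤ) := by
          push_cast; omega
        omega
  -- counting functions
  set c : ZMod p → ℕ := fun l => (P.filter (fun t => f t = l)).card with hc
  have hsum : ∑ l ∈ P.image f, c l = P.card := (Finset.card_eq_sum_card_image f P).symm
  have hsq : ∑ l ∈ P.image f, (c l) ^ 2 =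
      ((P ×ˢ P).filter (fun tu : (Fin n → ℤ) × (Fin n → ℤ) => f tu.1 = f tu.2)).card := by
    rw [Finset.card_eq_sum_card_fiberwise
      (f := fun tu : (Fin n → ℤ) × (Fin n → ℤ) => f tu.1) (t := P.image f)]
    · refine Finset.sum_congr rfl fun l _ => ?_
      have : ((P ×ˢ P).filter (fun tu : (Fin n → ℤ) × (Fin n → ℤ) => f tu.1 = f tu.2)).filter
          (fun tu => f tu.1 = l) =
          (P.filter (fun t => f t = l)) ×ˢ (P.filter (fun t => f t = l)) := by
        ext ⟨t, u⟩
        simp only [Finset.mem_filter, Finset.mem_product]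
        constructor
        · rintro ⟨⟨⟨h1, h2⟩, h3⟩, h4⟩
          exact ⟨⟨h1, h4⟩, ⟨h2, h4 ▸ h3.symm ▸ rfl⟩⟩
        · rintro ⟨⟨h1, h2⟩, ⟨h3, h4⟩⟩
          exact ⟨⟨⟨h1, h3⟩, h2.trans h4.symm⟩, h2⟩
      rw [this, Finset.card_product, hc, sq]
    · rintro ⟨t, u⟩ htu
      simp only [Finset.mem_coe, Finset.mem_filter, Finset.mem_product] at htu
      exact Finset.mem_image_of_mem _ htu.1.1
  -- pairs with equal products are counted by K
  have hYsub : Y ⊆ I₂ := Finset.filter_subset _ _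
  have hpairs :
      ((P ×ˢ P).filter (fun tu : (Fin n → ℤ) × (Fin n → ℤ) => f tu.1 = f tu.2)).card ≤ B := by
    refine le_trans (Finset.card_le_card ?_) hK
    rintro ⟨t, u⟩ htu
    simp only [Finset.mem_filter, Finset.mem_product, Fintype.mem_piFinset] at htu ⊢
    obtain ⟨⟨ht, hu⟩, heq⟩ := htu
    refine ⟨⟨fun i => hYsub (Fintype.mem_piFinset.mp ht i),
      fun i => hYsub (Fintype.mem_piFinset.mp hu i)⟩, heq, ?_⟩
    have : ∀ i, ((t i : ZMod p)) ≠ 0 := fun i =>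
      h0 _ (hYsub (Fintype.mem_piFinset.mp ht i))
    exact Finset.prod_ne_zero_iff.mpr fun i _ => this i
  -- Cauchy–Schwarz and conclusion
  have hcs : (∑ l ∈ P.image f, c l) ^ 2 ≤ (P.image f).card * ∑ l ∈ P.image f, (c l) ^ 2 :=
    sq_sum_le_card_mul_sum_sq
  calc M ^ (2 * n) = (M ^ n) ^ 2 := by rw [← pow_mul, mul_comm]
    _ = P.card ^ 2 := by rw [hPcard]
    _ = (∑ l ∈ P.image f, c l) ^ 2 := by rw [hsum]
    _ ≤ (P.image f).card * ∑ l ∈ P.image f, (c l) ^ 2 := hcs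
    _ ≤ (n * h₁) * B := by
        refine Nat.mul_le_mul himg ?_
        rw [hsq]; exact hpairs
    _ = n * h₁ * B := rfl
end
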